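/- Suppose a, b, c : (0, ε) → ℝ are positive C¹ solutions of 2bca' = b² − a² + c² and 2acb' = a² − b² + c² with a = b on (0, ε). Then c = (a²)' = 2aa' on (0, ε), and the metric coefficient satisfies a single constraint: setting r = 2a, one has c² = r²V/4 with V = 4(a')² where a' is computed with respect to ρ, i.e. the metric takes the form dr²/V + (r²/4)(σ₁² + σ₂²) + (r²V/4)σ₃². -/

import Mathlib

/-- Specialization of the SU(2)-invariant Kähler ODE system to the `U(1)×SU(2)` case
`a = b`: then `c = (a²)' = 2aa'`, and with `r = 2a` and `V = 4(a')²` one has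
`c² = r²V/4`, i.e. the metric takes the standard form (2.21). -/
theorem stmt_18 (ε : ℝ) (hε : 0 < ε) (a b c a' b' : ℝ → ℝ)
    (hapos : ∀ ρ ∈ Set.Ioo (0 : ℝ) ε, 0 < a ρ)
    (hbpos : ∀ ρ ∈ Set.Ioo (0 : ℝ) ε, 0 < b ρ)
    (hcpos : ∀ ρ ∈ Set.Ioo (0 : ℝ) ε, 0 < c ρ)
    (hda : ∀ ρ ∈ Set.Ioo (0 : ℝ) ε, HasDerivAt a (a' ρ) ρ)
    (hdb : ∀ ρ ∈ Set.Ioo (0 : ℝ) ε, HasDerivAt b (b' ρ) ρ)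
    (hda' : ContinuousOn a' (Set.Ioo 0 ε)) (hdb' : ContinuousOn b' (Set.Ioo 0 ε))
    (hode1 : ∀ ρ ∈ Set.Ioo (0 : ℝ) ε,
      2 * b ρ * c ρ * a' ρ = (b ρ) ^ 2 - (a ρ) ^ 2 + (c ρ) ^ 2)
    (hode2 : ∀ ρ ∈ Set.Ioo (0 : ℝ) ε,
      2 * a ρ * c ρ * b' ρ = (a ρ) ^ 2 - (b ρ) ^ 2 + (c ρ) ^ 2)
    (hab : ∀ ρ ∈ Set.Ioo (0 : ℝ) ε, a ρ = b ρ) :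
    ∀ ρ ∈ Set.Ioo (0 : ℝ) ε,
      c ρ = 2 * a ρ * a' ρ ∧
      c ρ = deriv (fun x => (a x) ^ 2) ρ ∧
      (c ρ) ^ 2 = (2 * a ρ) ^ 2 * (4 * (a' ρ) ^ 2) / 4 := by
  intro ρ hρ
  have h1 := hode1 ρ hρ
  rw [← hab ρ hρ] at h1
  have hc := hcpos ρ hρ
  have hc1 : c ρ * (2 * a ρ * a' ρ) = c ρ * c ρ := by ring_nf; ring_nf at h1; linarith
  have key : c ρ = 2 * a ρ * a' ρ := by
    have := mul_left_cancel₀ (ne_of_gt hc) hc1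
    linarith
  refine ⟨key, ?_, by rw [key]; ring⟩
  have hd : HasDerivAt (fun x => (a x) ^ 2) (2 * a ρ * a' ρ) ρ := by
    have := (hda ρ hρ).fun_pow 2
    simpa [mul_comm, mul_assoc, mul_left_comm] using this
  rw [hd.deriv, key]
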